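/- Let p(x,y,z,a,b) = (1−xz)(1−yz)/(1−xy) − a·(x−z)(1−yz)/(x−y) + b·(1−xz)(y−z)/(x−y) − ab·(x−z)(y−z)/(1−xy), and define the (n+1)×(n+1) matrix C with C_{i,j} = p(x_i,y_j,z,a_i,b_j) for i,j ≤ n, C_{i,n+1} = 1 − a_i, C_{n+1,j} = 1 − b_j, and C_{n+1,n+1} = (1−c)/(1−z²). Define the (2n+1)×(2n+1) matrix V by V_{i,j} = x_i^{j−1} − a_i x_i^{2n+1−j} for i ≤ n, V_{i,j} = y_{i−n}^{j−1} − b_{i−n} y_{i−n}^{2n+1−j} for n < i ≤ 2n, and V_{2n+1,j} = z^{j−1} − c·z^{2n+1−j}. Then det C = (−1)^n · det V / ( (1 − z²) ∏_{i,j} (x_i − y_j)(1 − x_i y_j) ). -/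

import Mathlib

open Polynomial Finset Matrix

namespace Okada

/-- The cleared numerator of `pfun`. -/
def Np {R : Type*} [CommRing R] (x y z a b : R) : R :=
  (1 - x*z)*(1 - y*z)*(x - y) - a*((x - z)*(1 - y*z)*(1 - x*y))
    + b*((1 - x*z)*(y - z)*(1 - x*y)) - a*b*((x - z)*(y - z)*(x - y))

/-- The big `(2n+1) × (2n+1)` matrix `V`. -/
def Vmat {R : Type*} [CommRing R] (n : ℕ) (x y a b : Fin n → R) (z c : R) :
    Matrix (Fin (2*n+1)) (Fin (2*n+1)) R :=
  Matrix.of fun i j : Fin (2 * n + 1) =>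
    if h : (i : ℕ) < n then
      x ⟨i, h⟩ ^ (j : ℕ) - a ⟨i, h⟩ * x ⟨i, h⟩ ^ (2 * n - (j : ℕ))
    else if h2 : (i : ℕ) < 2 * n then
      y ⟨(i : ℕ) - n, id (α := (i : ℕ) - n < n + 0) (by omega)⟩ ^ (j : ℕ)
        - b ⟨(i : ℕ) - n, id (α := (i : ℕ) - n < n + 0) (by omega)⟩ * y ⟨(i : ℕ) - n, id (α := (i : ℕ) - n < n + 0) (by omega)⟩ ^ (2 * n - (j : ℕ))
    else z ^ (j : ℕ) - c * z ^ (2 * n - (j : ℕ))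

/-- The denominator-cleared version of the matrix `C`. -/
def Bmat {R : Type*} [CommRing R] (n : ℕ) (x y a b : Fin n → R) (z c : R) :
    Matrix (Fin (n+1)) (Fin (n+1)) R :=
  Matrix.of fun i j =>
    if hi : (i : ℕ) < n then
      if hj : (j : ℕ) < n then
        Np (x ⟨i, hi⟩) (y ⟨j, hj⟩) z (a ⟨i, hi⟩) (b ⟨j, hj⟩) *
          ∏ k ∈ Finset.univ.erase ⟨j, hj⟩, ((x ⟨i, hi⟩ - y k) * (1 - y k * x ⟨i, hi⟩))
      else (1 - a ⟨i, hi⟩) * ∏ k, ((x ⟨i, hi⟩ - y k) * (1 - y k * x ⟨i, hi⟩))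
    else
      if hj : (j : ℕ) < n then (1 - z^2) * (1 - b ⟨j, hj⟩)
      else 1 - c

noncomputable section Generic

variable {F : Type*} [Field F] {n : ℕ}

/-! ### The interpolation polynomials -/

def pairP (y : Fin n → F) (k : Fin n) : F[X] := (X - C (y k)) * (1 - C (y k) * X)

def restP (y : Fin n → F) (j : Fin n) : F[X] := ∏ k ∈ univ.erase j, pairP y k

def fP (y : Fin n → F) : F[X] := ∏ k, pairP y k

def GP (y : Fin n → F) (z : F) (k : Fin n) : F[X] :=
  (X - C z) * ((1 - C z * X) * restP y k)

def PP (y : Fin n → F) (z : F) (j : Fin n) : F[X] :=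
  C (1 - y j * z) * ((1 - C z * X) * ((X - C (y j)) * restP y j))

def PstP (y : Fin n → F) (z : F) (j : Fin n) : F[X] :=
  C (1 - y j * z) * ((X - C z) * ((1 - C (y j) * X) * restP y j))

def SP (y : Fin n → F) (z : F) (j : Fin n) : F[X] :=
  C (z - y j) * ((1 - C z * X) * ((1 - C (y j) * X) * restP y j))

def SstP (y : Fin n → F) (z : F) (j : Fin n) : F[X] :=
  C (z - y j) * ((X - C z) * ((X - C (y j)) * restP y j))

def HP (y : Fin n → F) (z : F) (b : Fin n → F) (j : Fin n) : F[X] :=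
  PP y z j - C (b j) * SP y z j

def HstP (y : Fin n → F) (z : F) (b : Fin n → F) (j : Fin n) : F[X] :=
  PstP y z j - C (b j) * SstP y z j

/-! ### Scalar values -/

def Gd (y : Fin n → F) (z : F) (m : Fin n) : F :=
  (y m - z) * ((1 - z * y m) * ∏ k ∈ univ.erase m, ((y m - y k) * (1 - y k * y m)))

def Pst (y : Fin n → F) (z : F) (j : Fin n) : F :=
  (1 - y j * z) * ((y j - z) * ((1 - y j * y j) *
    ∏ k ∈ univ.erase j, ((y j - y k) * (1 - y k * y j))))

def Fs (y : Fin n → F) (z : F) : F := ∏ k, ((z - y k) * (1 - y k * z))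

/-! ### Evaluation lemmas -/

variable (y : Fin n → F) (z : F) (b : Fin n → F)

lemma eval_pairP (k : Fin n) (t : F) : (pairP y k).eval t = (t - y k) * (1 - y k * t) := by
  simp [pairP]

lemma eval_restP (j : Fin n) (t : F) :
    (restP y j).eval t = ∏ k ∈ univ.erase j, ((t - y k) * (1 - y k * t)) := by
  rw [restP, eval_prod]
  exact Finset.prod_congr rfl fun k _ => eval_pairP y k t

lemma eval_restP_ne {m j : Fin n} (h : m ≠ j) : (restP y j).eval (y m) = 0 := by
  rw [eval_restP]
  exact Finset.prod_eq_zero (Finset.mem_erase.mpr ⟨h, Finset.mem_univ m⟩) (by ring)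

lemma eval_fP (t : F) : (fP y).eval t = ∏ k, ((t - y k) * (1 - y k * t)) := by
  rw [fP, eval_prod]
  exact Finset.prod_congr rfl fun k _ => eval_pairP y k t

lemma eval_fP_y (m : Fin n) : (fP y).eval (y m) = 0 := by
  rw [eval_fP]
  exact Finset.prod_eq_zero (Finset.mem_univ m) (by ring)

lemma eval_fP_z : (fP y).eval z = Fs y z := by rw [eval_fP, Fs]

lemma eval_GP_self (m : Fin n) : (GP y z m).eval (y m) = Gd y z m := by
  simp only [GP, eval_mul, eval_sub, eval_one, eval_X, eval_C, eval_restP, Gd]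

lemma eval_GP_ne {k m : Fin n} (h : m ≠ k) : (GP y z k).eval (y m) = 0 := by
  simp only [GP, eval_mul, eval_restP_ne y h, mul_zero]

lemma eval_GP_z (k : Fin n) : (GP y z k).eval z = 0 := by
  simp [GP]

lemma eval_PP_y (j m : Fin n) : (PP y z j).eval (y m) = 0 := by
  rcases eq_or_ne m j with rfl | h
  · simp [PP]
  · simp [PP, eval_restP_ne y h]

lemma eval_PP_z (j : Fin n) : (PP y z j).eval z = (1 - z^2) * Fs y z := by
  simp only [PP, eval_mul, eval_sub, eval_one, eval_X, eval_C, eval_restP, Fs]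
  rw [← Finset.mul_prod_erase univ _ (Finset.mem_univ j)]
  ring

lemma eval_SP_ne {j m : Fin n} (h : m ≠ j) : (SP y z j).eval (y m) = 0 := by
  simp [SP, eval_restP_ne y h]

lemma eval_SP_self (j : Fin n) : (SP y z j).eval (y j) = -(Pst y z j) := by
  simp only [SP, eval_mul, eval_sub, eval_one, eval_X, eval_C, eval_restP, Pst]
  ring

lemma eval_SP_z (j : Fin n) : (SP y z j).eval z = (1 - z^2) * Fs y z := by
  simp only [SP, eval_mul, eval_sub, eval_one, eval_X, eval_C, eval_restP, Fs]
  rw [← Finset.mul_prod_erase univ _ (Finset.mem_univ j)]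
  ring

lemma eval_PstP_ne {j m : Fin n} (h : m ≠ j) : (PstP y z j).eval (y m) = 0 := by
  simp [PstP, eval_restP_ne y h]

lemma eval_PstP_self (j : Fin n) : (PstP y z j).eval (y j) = Pst y z j := by
  simp only [PstP, eval_mul, eval_sub, eval_one, eval_X, eval_C, eval_restP, Pst]

lemma eval_PstP_z (j : Fin n) : (PstP y z j).eval z = 0 := by simp [PstP]

lemma eval_SstP_y (j m : Fin n) : (SstP y z j).eval (y m) = 0 := by
  rcases eq_or_ne m j with rfl | h
  · simp [SstP]
  · simp [SstP, eval_restP_ne y h]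

lemma eval_SstP_z (j : Fin n) : (SstP y z j).eval z = 0 := by simp [SstP]

lemma eval_HP_y_ne {j m : Fin n} (h : m ≠ j) : (HP y z b j).eval (y m) = 0 := by
  simp [HP, eval_PP_y, eval_SP_ne y z h]

lemma eval_HP_y_self (j : Fin n) : (HP y z b j).eval (y j) = b j * Pst y z j := by
  simp [HP, eval_PP_y, eval_SP_self]

lemma eval_HP_z (j : Fin n) :
    (HP y z b j).eval z = (1 - z^2) * Fs y z - b j * ((1 - z^2) * Fs y z) := by
  simp [HP, eval_PP_z, eval_SP_z]

lemma eval_HstP_y_ne {j m : Fin n} (h : m ≠ j) : (HstP y z b j).eval (y m) = 0 := by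
  simp [HstP, eval_PstP_ne y z h, eval_SstP_y]

lemma eval_HstP_y_self (j : Fin n) : (HstP y z b j).eval (y j) = Pst y z j := by
  simp [HstP, eval_PstP_self, eval_SstP_y]

lemma eval_HstP_z (j : Fin n) : (HstP y z b j).eval z = 0 := by
  simp [HstP, eval_PstP_z, eval_SstP_z]

/-! ### Degree bounds -/

lemma natDegree_one_sub_CX (r : F) : (1 - C r * X).natDegree ≤ 1 :=
  le_trans (natDegree_sub_le _ _) (by
    simp only [natDegree_one, max_le_iff]
    exact ⟨Nat.zero_le _, le_trans (natDegree_C_mul_le r X) natDegree_X_le⟩)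

lemma natDegree_pairP (k : Fin n) : (pairP y k).natDegree ≤ 2 :=
  le_trans natDegree_mul_le
    (add_le_add (natDegree_X_sub_C_le _) (natDegree_one_sub_CX _))

lemma natDegree_restP (j : Fin n) : (restP y j).natDegree ≤ 2*(n-1) := by
  refine le_trans (natDegree_prod_le _ _) ?_
  have h := Finset.sum_le_card_nsmul (univ.erase j) (fun k => (pairP y k).natDegree) 2
    (fun k _ => natDegree_pairP y k)
  rw [Finset.card_erase_of_mem (Finset.mem_univ j), Finset.card_univ, Fintype.card_fin] at h
  simpa [smul_eq_mul, mul_comm] using h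

lemma natDegree_fP : (fP y).natDegree ≤ 2*n := by
  refine le_trans (natDegree_prod_le _ _) ?_
  have h := Finset.sum_le_card_nsmul univ (fun k => (pairP y k).natDegree) 2
    (fun k _ => natDegree_pairP y k)
  rw [Finset.card_univ, Fintype.card_fin] at h
  simpa [smul_eq_mul, mul_comm] using h

lemma natDegree_GP (k : Fin n) : (GP y z k).natDegree ≤ 2*n := by
  have hn : (1:ℕ) ≤ n := k.pos
  refine le_trans natDegree_mul_le (le_trans (add_le_add (natDegree_X_sub_C_le _)
    (le_trans natDegree_mul_le (add_le_add (natDegree_one_sub_CX _) (natDegree_restP y k)))) ?_)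
  omega

lemma natDegree_PP (j : Fin n) : (PP y z j).natDegree ≤ 2*n := by
  have hn : (1:ℕ) ≤ n := j.pos
  refine le_trans (natDegree_C_mul_le _ _) (le_trans natDegree_mul_le (le_trans
    (add_le_add (natDegree_one_sub_CX _)
      (le_trans natDegree_mul_le (add_le_add (natDegree_X_sub_C_le _)
        (natDegree_restP y j)))) ?_))
  omega

lemma natDegree_PstP (j : Fin n) : (PstP y z j).natDegree ≤ 2*n := by
  have hn : (1:ℕ) ≤ n := j.pos
  refine le_trans (natDegree_C_mul_le _ _) (le_trans natDegree_mul_le (le_trans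
    (add_le_add (natDegree_X_sub_C_le _)
      (le_trans natDegree_mul_le (add_le_add (natDegree_one_sub_CX _)
        (natDegree_restP y j)))) ?_))
  omega

lemma natDegree_SP (j : Fin n) : (SP y z j).natDegree ≤ 2*n := by
  have hn : (1:ℕ) ≤ n := j.pos
  refine le_trans (natDegree_C_mul_le _ _) (le_trans natDegree_mul_le (le_trans
    (add_le_add (natDegree_one_sub_CX _)
      (le_trans natDegree_mul_le (add_le_add (natDegree_one_sub_CX _)
        (natDegree_restP y j)))) ?_))
  omega

lemma natDegree_SstP (j : Fin n) : (SstP y z j).natDegree ≤ 2*n := by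
  have hn : (1:ℕ) ≤ n := j.pos
  refine le_trans (natDegree_C_mul_le _ _) (le_trans natDegree_mul_le (le_trans
    (add_le_add (natDegree_X_sub_C_le _)
      (le_trans natDegree_mul_le (add_le_add (natDegree_X_sub_C_le _)
        (natDegree_restP y j)))) ?_))
  omega

lemma natDegree_HP (j : Fin n) : (HP y z b j).natDegree ≤ 2*n :=
  le_trans (natDegree_sub_le _ _) (max_le (natDegree_PP y z j)
    (le_trans (natDegree_C_mul_le _ _) (natDegree_SP y z j)))

lemma natDegree_HstP (j : Fin n) : (HstP y z b j).natDegree ≤ 2*n :=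
  le_trans (natDegree_sub_le _ _) (max_le (natDegree_PstP y z j)
    (le_trans (natDegree_C_mul_le _ _) (natDegree_SstP y z j)))

/-! ### "Star" (reciprocal) lemmas -/

lemma star_pairP (k : Fin n) {t : F} (ht : t ≠ 0) :
    t^2 * (pairP y k).eval t⁻¹ = (pairP y k).eval t := by
  rw [eval_pairP, eval_pairP]
  field_simp

lemma star_restP (j : Fin n) {t : F} (ht : t ≠ 0) :
    t^(2*(n-1)) * (restP y j).eval t⁻¹ = (restP y j).eval t := by
  rw [restP, eval_prod, eval_prod]
  have hc : (univ.erase j).card = n - 1 := by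
    rw [Finset.card_erase_of_mem (Finset.mem_univ j), Finset.card_univ, Fintype.card_fin]
  calc t^(2*(n-1)) * ∏ k ∈ univ.erase j, (pairP y k).eval t⁻¹
      = ∏ k ∈ univ.erase j, (t^2 * (pairP y k).eval t⁻¹) := by
        rw [Finset.prod_mul_distrib, Finset.prod_const, hc, ← pow_mul]
    _ = ∏ k ∈ univ.erase j, (pairP y k).eval t :=
        Finset.prod_congr rfl fun k _ => star_pairP y k ht

lemma star_fP {t : F} (ht : t ≠ 0) : t^(2*n) * (fP y).eval t⁻¹ = (fP y).eval t := by
  rw [fP, eval_prod, eval_prod]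
  calc t^(2*n) * ∏ k, (pairP y k).eval t⁻¹
      = ∏ k : Fin n, (t^2 * (pairP y k).eval t⁻¹) := by
        rw [Finset.prod_mul_distrib, Finset.prod_const, Finset.card_univ, Fintype.card_fin,
          ← pow_mul]
    _ = ∏ k, (pairP y k).eval t := Finset.prod_congr rfl fun k _ => star_pairP y k ht

lemma star_GP (k : Fin n) {t : F} (ht : t ≠ 0) :
    t^(2*n) * (GP y z k).eval t⁻¹ = (GP y z k).eval t := by
  have hn : 2*n = 2 + 2*(n-1) := by have := k.pos; omega
  have h1 := star_restP y k ht
  simp only [GP, eval_mul, eval_sub, eval_one, eval_X, eval_C]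
  rw [← h1, hn, pow_add]
  field_simp

lemma star_PP (j : Fin n) {t : F} (ht : t ≠ 0) :
    t^(2*n) * (PP y z j).eval t⁻¹ = (PstP y z j).eval t := by
  have hn : 2*n = 2 + 2*(n-1) := by have := j.pos; omega
  have h1 := star_restP y j ht
  simp only [PP, PstP, eval_mul, eval_sub, eval_one, eval_X, eval_C]
  rw [← h1, hn, pow_add]
  field_simp

lemma star_SP (j : Fin n) {t : F} (ht : t ≠ 0) :
    t^(2*n) * (SP y z j).eval t⁻¹ = (SstP y z j).eval t := by
  have hn : 2*n = 2 + 2*(n-1) := by have := j.pos; omega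
  have h1 := star_restP y j ht
  simp only [SP, SstP, eval_mul, eval_sub, eval_one, eval_X, eval_C]
  rw [← h1, hn, pow_add]
  field_simp

lemma star_HP (j : Fin n) {t : F} (ht : t ≠ 0) :
    t^(2*n) * (HP y z b j).eval t⁻¹ = (HstP y z b j).eval t := by
  simp only [HP, HstP, eval_sub, eval_mul, eval_C, mul_sub]
  rw [← star_PP y z j ht, ← star_SP y z j ht]
  ring

end Generic


noncomputable section Matrices

variable {F : Type*} [Field F] {n : ℕ}

abbrev Idx (n : ℕ) := (Fin n ⊕ Unit) ⊕ Fin n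

def eIdx (n : ℕ) : Fin (2*n+1) ≃ Idx n where
  toFun i := if h : (i : ℕ) < n then .inl (.inl ⟨i, h⟩)
    else if h2 : (i : ℕ) < 2*n then .inr ⟨(i : ℕ) - n, id (α := (i : ℕ) - n < n + 0) (by omega)⟩
    else .inl (.inr ())
  invFun := Sum.elim (Sum.elim (fun i => ⟨(i : ℕ), by omega⟩) (fun _ => ⟨2*n, by omega⟩))
    (fun m => ⟨n + (m : ℕ), by omega⟩)
  left_inv i := by
    dsimp only
    split_ifs with h h2
    · exact Fin.ext rfl
    · exact Fin.ext (by simp only [Sum.elim_inl, Sum.elim_inr]; omega)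
    · exact Fin.ext (by simp only [Sum.elim_inl, Sum.elim_inr]; omega)
  right_inv q := by
    rcases q with (i | u) | m
    · dsimp only [Sum.elim_inl]
      rw [dif_pos i.isLt]
    · dsimp only [Sum.elim_inl, Sum.elim_inr]
      rw [dif_neg (by omega), dif_neg (by omega)]
    · dsimp only [Sum.elim_inr]
      rw [dif_neg (by omega), dif_pos (by omega)]
      congr 1
      exact Fin.ext (by simp)

def eFin (n : ℕ) : Fin (n+1) ≃ (Fin n ⊕ Unit) where
  toFun i := if h : (i : ℕ) < n then .inl ⟨i, h⟩ else .inr ()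
  invFun := Sum.elim (fun j => ⟨(j : ℕ), by omega⟩) (fun _ => ⟨n, by omega⟩)
  left_inv i := by
    dsimp only
    split_ifs with h
    · exact Fin.ext rfl
    · exact Fin.ext (by simp only [Sum.elim_inl, Sum.elim_inr]; omega)
  right_inv q := by
    rcases q with j | u
    · dsimp only [Sum.elim_inl]
      rw [dif_pos j.isLt]
    · dsimp only [Sum.elim_inr]
      rw [dif_neg (by omega)]

def tpt (x y : Fin n → F) (z : F) : Idx n → F := Sum.elim (Sum.elim x fun _ => z) y

def dpt (a b : Fin n → F) (c : F) : Idx n → F := Sum.elim (Sum.elim a fun _ => c) b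

def spt (y : Fin n → F) (z : F) : Idx n → F :=
  Sum.elim (Sum.elim (fun m => (y m)⁻¹) fun _ => z) y

def colQ (y : Fin n → F) (z : F) (b : Fin n → F) : Idx n → F[X] :=
  Sum.elim (Sum.elim (HP y z b) fun _ => fP y) (GP y z)

def colQst (y : Fin n → F) (z : F) (b : Fin n → F) : Idx n → F[X] :=
  Sum.elim (Sum.elim (HstP y z b) fun _ => fP y) (GP y z)

lemma natDegree_colQ (y : Fin n → F) (z : F) (b : Fin n → F) (q : Idx n) : (colQ y z b q).natDegree ≤ 2*n := by
  rcases q with (j | u) | k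
  · exact natDegree_HP y z b j
  · exact natDegree_fP y
  · exact natDegree_GP y z k

lemma star_colQ (y : Fin n → F) (z : F) (b : Fin n → F) (q : Idx n) {t : F} (ht : t ≠ 0) :
    t^(2*n) * (colQ y z b q).eval t⁻¹ = (colQst y z b q).eval t := by
  rcases q with (j | u) | k
  · exact star_HP y z b j ht
  · exact star_fP y ht
  · exact star_GP y z k ht

def Amat (x y a b : Fin n → F) (z c : F) : Matrix (Idx n) (Fin (2*n+1)) F :=
  Matrix.of fun r k => tpt x y z r ^ (k : ℕ) - dpt a b c r * tpt x y z r ^ (2*n - (k : ℕ))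

def Tmat (y : Fin n → F) (z : F) (b : Fin n → F) : Matrix (Fin (2*n+1)) (Idx n) F :=
  Matrix.of fun k q => (colQ y z b q).coeff k

def VdmA (y : Fin n → F) (z : F) : Matrix (Idx n) (Fin (2*n+1)) F :=
  Matrix.of fun r k => spt y z r ^ (k : ℕ)

lemma rowfun (t d : F) (ht : t ≠ 0) (Q Qst : F[X]) (hdeg : Q.natDegree < 2*n+1)
    (hstar : t^(2*n) * Q.eval t⁻¹ = Qst.eval t) :
    ∑ k : Fin (2*n+1), (t ^ (k : ℕ) - d * t ^ (2*n - (k : ℕ))) * Q.coeff k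
      = Q.eval t - d * Qst.eval t := by
  have h1 : ∑ k : Fin (2*n+1), t ^ (k : ℕ) * Q.coeff k = Q.eval t := by
    rw [Fin.sum_univ_eq_sum_range (fun k => t ^ k * Q.coeff k) (2*n+1),
      eval_eq_sum_range' hdeg]
    exact Finset.sum_congr rfl fun k _ => mul_comm _ _
  have h2 : ∑ k : Fin (2*n+1), t ^ (2*n - (k : ℕ)) * Q.coeff k = Qst.eval t := by
    rw [Fin.sum_univ_eq_sum_range (fun k => t ^ (2*n - k) * Q.coeff k) (2*n+1), ← hstar,
      eval_eq_sum_range' hdeg, Finset.mul_sum]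
    refine Finset.sum_congr rfl fun k hk => ?_
    rw [Finset.mem_range] at hk
    rw [pow_sub₀ t ht (by omega), ← inv_pow]
    ring
  calc ∑ k : Fin (2*n+1), (t ^ (k : ℕ) - d * t ^ (2*n - (k : ℕ))) * Q.coeff k
      = (∑ k : Fin (2*n+1), t ^ (k : ℕ) * Q.coeff k)
        - d * ∑ k : Fin (2*n+1), t ^ (2*n - (k : ℕ)) * Q.coeff k := by
        rw [Finset.mul_sum, ← Finset.sum_sub_distrib]
        exact Finset.sum_congr rfl fun k _ => by ring
    _ = _ := by rw [h1, h2]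

lemma tpt_ne (x y : Fin n → F) (z : F) (hx0 : ∀ i, x i ≠ 0) (hy0 : ∀ m, y m ≠ 0) (hz0 : z ≠ 0) (r : Idx n) :
    tpt x y z r ≠ 0 := by
  rcases r with (i | u) | m
  · exact hx0 i
  · exact hz0
  · exact hy0 m

lemma Mmat_apply (x y a b : Fin n → F) (z c : F) (hx0 : ∀ i, x i ≠ 0) (hy0 : ∀ m, y m ≠ 0) (hz0 : z ≠ 0) (r q : Idx n) :
    (Amat x y a b z c * Tmat y z b) r q
      = (colQ y z b q).eval (tpt x y z r)
        - dpt a b c r * (colQst y z b q).eval (tpt x y z r) := by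
  rw [Matrix.mul_apply]
  exact rowfun (tpt x y z r) (dpt a b c r) (tpt_ne x y z hx0 hy0 hz0 r) _ _
    (Nat.lt_succ_of_le (natDegree_colQ y z b q))
    (star_colQ y z b q (tpt_ne x y z hx0 hy0 hz0 r))

lemma Emat_apply (y : Fin n → F) (z : F) (b : Fin n → F) (r q : Idx n) :
    (VdmA y z * Tmat y z b) r q = (colQ y z b q).eval (spt y z r) := by
  rw [Matrix.mul_apply]
  rw [show ∑ k : Fin (2*n+1), VdmA y z r k * Tmat y z b k q
      = ∑ k : Fin (2*n+1), spt y z r ^ (k : ℕ) * (colQ y z b q).coeff k from rfl]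
  rw [Fin.sum_univ_eq_sum_range (fun k => spt y z r ^ k * (colQ y z b q).coeff k) (2*n+1),
    eval_eq_sum_range' (Nat.lt_succ_of_le (natDegree_colQ y z b q))]
  exact Finset.sum_congr rfl fun k _ => mul_comm _ _

end Matrices

noncomputable section Blocks

variable {F : Type*} [Field F] {n : ℕ}

/-- Sum-type version of `Bmat`. -/
def BmatS (x y a b : Fin n → F) (z c : F) : Matrix (Fin n ⊕ Unit) (Fin n ⊕ Unit) F :=
  Matrix.of fun p q =>
    Sum.elim (fun i => Sum.elim (fun j => Np (x i) (y j) z (a i) (b j) *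
        ∏ k ∈ univ.erase j, ((x i - y k) * (1 - y k * x i)))
      (fun _ => (1 - a i) * ∏ k, ((x i - y k) * (1 - y k * x i))) q)
    (fun _ => Sum.elim (fun j => (1 - z^2) * (1 - b j)) (fun _ => 1 - c) q) p

variable (x y a b : Fin n → F) (z c : F)

lemma M_block21 (hx0 : ∀ i, x i ≠ 0) (hy0 : ∀ m, y m ≠ 0) (hz0 : z ≠ 0) :
    (Amat x y a b z c * Tmat y z b).toBlocks₂₁ = 0 := by
  ext m p
  rw [Matrix.toBlocks₂₁]
  simp only [Matrix.of_apply, Matrix.zero_apply]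
  rw [Mmat_apply x y a b z c hx0 hy0 hz0]
  rcases p with j | u
  · show (HP y z b j).eval (y m) - b m * (HstP y z b j).eval (y m) = 0
    rcases eq_or_ne m j with rfl | h
    · rw [eval_HP_y_self, eval_HstP_y_self]
      ring
    · rw [eval_HP_y_ne y z b h, eval_HstP_y_ne y z b h]
      ring
  · show (fP y).eval (y m) - b m * (fP y).eval (y m) = 0
    rw [eval_fP_y]
    ring

lemma M_block22 (hx0 : ∀ i, x i ≠ 0) (hy0 : ∀ m, y m ≠ 0) (hz0 : z ≠ 0) :
    (Amat x y a b z c * Tmat y z b).toBlocks₂₂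
      = Matrix.diagonal (fun m => (1 - b m) * Gd y z m) := by
  ext m k
  rw [Matrix.toBlocks₂₂]
  simp only [Matrix.of_apply, Matrix.diagonal_apply]
  rw [Mmat_apply x y a b z c hx0 hy0 hz0]
  show (GP y z k).eval (y m) - b m * (GP y z k).eval (y m) = _
  rcases eq_or_ne m k with rfl | h
  · rw [eval_GP_self, if_pos rfl]
    ring
  · rw [eval_GP_ne y z h, if_neg h]
    ring

lemma M_block11 (hx0 : ∀ i, x i ≠ 0) (hy0 : ∀ m, y m ≠ 0) (hz0 : z ≠ 0) :
    (Amat x y a b z c * Tmat y z b).toBlocks₁₁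
      = Matrix.of (fun p q =>
          (Sum.elim (fun _ => (1:F)) (fun _ => Fs y z) p) * BmatS x y a b z c p q) := by
  ext p q
  rw [Matrix.toBlocks₁₁]
  simp only [Matrix.of_apply]
  rw [Mmat_apply x y a b z c hx0 hy0 hz0]
  rcases p with i | u <;> rcases q with j | u'
  · show (HP y z b j).eval (x i) - a i * (HstP y z b j).eval (x i)
      = 1 * BmatS x y a b z c (Sum.inl i) (Sum.inl j)
    simp only [HP, HstP, PP, SP, PstP, SstP, eval_mul, eval_sub, eval_one, eval_X, eval_C,
      eval_restP, BmatS, Matrix.of_apply, Sum.elim_inl, Np, one_mul]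
    ring
  · show (fP y).eval (x i) - a i * (fP y).eval (x i)
      = 1 * BmatS x y a b z c (Sum.inl i) (Sum.inr u')
    rw [eval_fP]
    simp only [BmatS, Matrix.of_apply, Sum.elim_inl, Sum.elim_inr, one_mul]
    ring
  · show (HP y z b j).eval z - c * (HstP y z b j).eval z
      = Fs y z * BmatS x y a b z c (Sum.inr u) (Sum.inl j)
    rw [eval_HP_z, eval_HstP_z]
    simp only [BmatS, Matrix.of_apply, Sum.elim_inl, Sum.elim_inr]
    ring
  · show (fP y).eval z - c * (fP y).eval z
      = Fs y z * BmatS x y a b z c (Sum.inr u) (Sum.inr u')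
    rw [eval_fP_z]
    simp only [BmatS, Matrix.of_apply, Sum.elim_inr]
    ring

lemma detM (hx0 : ∀ i, x i ≠ 0) (hy0 : ∀ m, y m ≠ 0) (hz0 : z ≠ 0) :
    (Amat x y a b z c * Tmat y z b).det
      = Fs y z * ((BmatS x y a b z c).det * ∏ m, ((1 - b m) * Gd y z m)) := by
  conv_lhs => rw [← Matrix.fromBlocks_toBlocks (Amat x y a b z c * Tmat y z b),
    M_block21 x y a b z c hx0 hy0 hz0, M_block11 x y a b z c hx0 hy0 hz0,
    M_block22 x y a b z c hx0 hy0 hz0]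
  rw [Matrix.det_fromBlocks_zero₂₁, Matrix.det_mul_column, Matrix.det_diagonal]
  rw [Fintype.prod_sum_type]
  simp only [Sum.elim_inl, Sum.elim_inr, Finset.prod_const_one, one_mul]
  rw [Finset.prod_const]
  simp [mul_assoc]

/-! ### The evaluation matrix E -/

def DD (y : Fin n → F) (z : F) (b : Fin n → F) (m : Fin n) : F :=
  (1 - b m) * (((y m)^(2*n))⁻¹ * Pst y z m)

def ZRmat (y : Fin n → F) (z : F) (b : Fin n → F) : Matrix Unit (Fin n) F :=
  Matrix.of fun _ j => (1 - z^2) * Fs y z - b j * ((1 - z^2) * Fs y z)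

def FUmat (y : Fin n → F) (z : F) : Matrix Unit Unit F := Matrix.of fun _ _ => Fs y z

def E1mat (y : Fin n → F) (z : F) (b : Fin n → F) : Matrix (Fin n ⊕ Unit) (Fin n ⊕ Unit) F :=
  Matrix.fromBlocks (Matrix.diagonal (DD y z b)) 0 (ZRmat y z b) (FUmat y z)

def E2mat (y : Fin n → F) (z : F) : Matrix (Fin n ⊕ Unit) (Fin n) F :=
  Matrix.of fun p k =>
    Sum.elim (fun m => if m = k then ((y m)^(2*n))⁻¹ * Gd y z m else 0) (fun _ => 0) p

def Wmat (y : Fin n → F) (z : F) (b : Fin n → F) : Matrix (Fin n) (Fin n ⊕ Unit) F :=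
  Matrix.of fun m p =>
    Sum.elim (fun j => if m = j then b j * (Pst y z j * (Gd y z j)⁻¹) else 0) (fun _ => 0) p

lemma eval_colQ_inv (y : Fin n → F) (z : F) (b : Fin n → F) (hy0 : ∀ m, y m ≠ 0) (m : Fin n) (q : Idx n) :
    (colQ y z b q).eval ((y m)⁻¹) = ((y m)^(2*n))⁻¹ * (colQst y z b q).eval (y m) := by
  rw [← star_colQ y z b q (hy0 m), inv_mul_cancel_left₀ (pow_ne_zero _ (hy0 m))]

lemma E_factor (y : Fin n → F) (z : F) (b : Fin n → F) (hy0 : ∀ m, y m ≠ 0) (hGd : ∀ m, Gd y z m ≠ 0) :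
    VdmA y z * Tmat y z b
      = Matrix.fromBlocks (E1mat y z b) (E2mat y z) 0 (Matrix.diagonal (Gd y z))
        * Matrix.fromBlocks 1 0 (Wmat y z b) 1 := by
  rw [Matrix.fromBlocks_multiply]
  simp only [Matrix.mul_one, Matrix.mul_zero, Matrix.zero_mul, Matrix.one_mul, add_zero,
    zero_add, Matrix.zero_mul]
  ext r q
  rw [Emat_apply y z b]
  rcases r with (m | u) | m <;> rcases q with (j | u') | k
  · -- row 1/y_m, col H_j
    show (colQ y z b (Sum.inl (Sum.inl j))).eval ((y m)⁻¹) = _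
    rw [eval_colQ_inv y z b hy0]
    show ((y m)^(2*n))⁻¹ * (HstP y z b j).eval (y m)
      = ((E1mat y z b + E2mat y z * Wmat y z b) : Matrix _ _ F) (Sum.inl m) (Sum.inl j)
    rw [Matrix.add_apply, Matrix.mul_apply]
    simp only [E1mat, E2mat, Wmat, Matrix.fromBlocks_apply₁₁, Matrix.of_apply, Sum.elim_inl,
      Matrix.diagonal_apply, ite_mul, zero_mul]
    rw [Finset.sum_ite_eq univ m
      (fun k => (((y m)^(2*n))⁻¹ * Gd y z m) * (if k = j then b j * (Pst y z j * (Gd y z j)⁻¹) else 0))]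
    rcases eq_or_ne m j with rfl | h
    · rw [eval_HstP_y_self, if_pos rfl, if_pos (Finset.mem_univ m), if_pos rfl, DD]
      field_simp
      rw [mul_div_cancel_right₀ _ (hGd m)]
      ring
    · rw [eval_HstP_y_ne y z b h, if_neg h, if_pos (Finset.mem_univ m), if_neg h]
      simp
  · -- row 1/y_m, col f
    show (colQ y z b (Sum.inl (Sum.inr u'))).eval ((y m)⁻¹) = _
    rw [eval_colQ_inv y z b hy0]
    show ((y m)^(2*n))⁻¹ * (fP y).eval (y m)
      = ((E1mat y z b + E2mat y z * Wmat y z b) : Matrix _ _ F) (Sum.inl m) (Sum.inr u')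
    rw [Matrix.add_apply, Matrix.mul_apply, eval_fP_y]
    simp [E1mat, E2mat, Wmat]
  · -- row 1/y_m, col G_k
    show (colQ y z b (Sum.inr k)).eval ((y m)⁻¹) = _
    rw [eval_colQ_inv y z b hy0]
    show ((y m)^(2*n))⁻¹ * (GP y z k).eval (y m) = E2mat y z (Sum.inl m) k
    rcases eq_or_ne m k with rfl | h
    · rw [eval_GP_self]
      simp [E2mat]
    · rw [eval_GP_ne y z h]
      simp [E2mat, h]
  · -- row z, col H_j
    show (HP y z b j).eval z = _
    rw [eval_HP_z]
    show _ = ((E1mat y z b + E2mat y z * Wmat y z b) : Matrix _ _ F) (Sum.inr u) (Sum.inl j)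
    rw [Matrix.add_apply, Matrix.mul_apply]
    simp [E1mat, E2mat, Wmat, ZRmat]
  · -- row z, col f
    show (fP y).eval z = _
    rw [eval_fP_z]
    show _ = ((E1mat y z b + E2mat y z * Wmat y z b) : Matrix _ _ F) (Sum.inr u) (Sum.inr u')
    rw [Matrix.add_apply, Matrix.mul_apply]
    simp [E1mat, E2mat, Wmat, FUmat]
  · -- row z, col G_k
    show (GP y z k).eval z = E2mat y z (Sum.inr u) k
    rw [eval_GP_z]
    simp [E2mat]
  · -- row y_m, col H_j
    show (HP y z b j).eval (y m) = (Matrix.diagonal (Gd y z) * Wmat y z b) m (Sum.inl j)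
    rw [Matrix.diagonal_mul]
    rcases eq_or_ne m j with rfl | h
    · rw [eval_HP_y_self]
      simp only [Wmat, Matrix.of_apply, Sum.elim_inl, if_pos rfl]
      field_simp
      rw [if_pos trivial, mul_div_assoc']
      exact (mul_div_cancel_left₀ _ (hGd m)).symm
    · rw [eval_HP_y_ne y z b h]
      simp [Wmat, h]
  · -- row y_m, col f
    show (fP y).eval (y m) = (Matrix.diagonal (Gd y z) * Wmat y z b) m (Sum.inr u')
    rw [Matrix.diagonal_mul, eval_fP_y]
    simp [Wmat]
  · -- row y_m, col G_k
    show (GP y z k).eval (y m) = Matrix.diagonal (Gd y z) m k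
    rcases eq_or_ne m k with rfl | h
    · rw [eval_GP_self]
      simp
    · rw [eval_GP_ne y z h]
      simp [Matrix.diagonal_apply_ne _ h]

lemma detE (y : Fin n → F) (z : F) (b : Fin n → F) (hy0 : ∀ m, y m ≠ 0) (hGd : ∀ m, Gd y z m ≠ 0) :
    (VdmA y z * Tmat y z b).det
      = (∏ m, DD y z b m) * (Fs y z * ∏ m, Gd y z m) := by
  rw [E_factor y z b hy0 hGd, Matrix.det_mul, Matrix.det_fromBlocks_zero₂₁,
    Matrix.det_fromBlocks_zero₁₂, E1mat, Matrix.det_fromBlocks_zero₁₂,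
    Matrix.det_diagonal, Matrix.det_diagonal, Matrix.det_one, Matrix.det_one,
    Matrix.det_unique]
  simp only [FUmat, Matrix.of_apply]
  ring

end Blocks

noncomputable section VprodProof

variable {F : Type*} [Field F] {n : ℕ}

lemma prod_ite_lt_left {q : ℕ} (w : Fin q → F) :
    (∏ i : Fin q, ∏ j : Fin q, if (i:ℕ) < (j:ℕ) then w i else 1) = ∏ i : Fin q, w i ^ (q - 1 - (i:ℕ)) := by
  refine Finset.prod_congr rfl fun i _ => ?_
  rw [← Finset.prod_filter, Finset.prod_const]
  congr 1
  have h : Finset.univ.filter (fun j : Fin q => (i:ℕ) < (j:ℕ)) = Finset.Ioi i := by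
    ext j
    simp only [Finset.mem_filter, Finset.mem_univ, true_and, Finset.mem_Ioi, Fin.lt_def]
  rw [h, Fin.card_Ioi]

lemma prod_ite_lt_right {q : ℕ} (w : Fin q → F) :
    (∏ i : Fin q, ∏ j : Fin q, if (i:ℕ) < (j:ℕ) then w j else 1) = ∏ j : Fin q, w j ^ ((j:ℕ)) := by
  rw [Finset.prod_comm]
  refine Finset.prod_congr rfl fun j _ => ?_
  rw [← Finset.prod_filter, Finset.prod_const]
  congr 1
  have h : Finset.univ.filter (fun i : Fin q => (i:ℕ) < (j:ℕ)) = Finset.Iio j := by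
    ext i
    simp only [Finset.mem_filter, Finset.mem_univ, true_and, Finset.mem_Iio, Fin.lt_def]
  rw [h, Fin.card_Iio]

lemma prod_erase_split (g : Fin n → Fin n → F) :
    (∏ m, ∏ k ∈ univ.erase m, g m k)
      = (∏ m : Fin n, ∏ k : Fin n, if (m:ℕ) < (k:ℕ) then g m k else 1)
        * ∏ m : Fin n, ∏ k : Fin n, if (m:ℕ) < (k:ℕ) then g k m else 1 := by
  have h1 : ∀ m, (∏ k ∈ univ.erase m, g m k) = ∏ k, if k = m then 1 else g m k := by
    intro m
    rw [← Finset.mul_prod_erase univ (fun k => if k = m then 1 else g m k) (Finset.mem_univ m),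
      if_pos rfl, one_mul]
    exact Finset.prod_congr rfl fun k hk => (if_neg (Finset.ne_of_mem_erase hk)).symm
  calc ∏ m, ∏ k ∈ univ.erase m, g m k
      = ∏ m : Fin n, ∏ k : Fin n, ((if (m:ℕ) < (k:ℕ) then g m k else 1)
          * (if (k:ℕ) < (m:ℕ) then g m k else 1)) := by
        refine Finset.prod_congr rfl fun m _ => ?_
        rw [h1 m]
        refine Finset.prod_congr rfl fun k _ => ?_
        rcases Nat.lt_trichotomy ((m:ℕ)) ((k:ℕ)) with h | h | h
        · have hkm : ¬ (k = m) := fun e => by subst e; omega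
          rw [if_neg hkm, if_pos h, if_neg (by omega), mul_one]
        · have he : k = m := Fin.ext (by omega)
          rw [if_pos he, if_neg (by omega), if_neg (by omega), mul_one]
        · have hkm : ¬ (k = m) := fun e => by subst e; omega
          rw [if_neg hkm, if_neg (by omega), if_pos h, one_mul]
    _ = _ := by
        rw [Finset.prod_congr rfl fun m _ => Finset.prod_mul_distrib]
        rw [Finset.prod_mul_distrib]
        congr 1
        rw [Finset.prod_comm]

variable (y : Fin n → F) (z : F)

lemma trans_T1 (hy0 : ∀ m, y m ≠ 0) :
    (∏ i : Fin n, ∏ j : Fin n, if (i:ℕ) < (j:ℕ) then (y j)⁻¹ - (y i)⁻¹ else 1)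
      = (∏ i : Fin n, ∏ j : Fin n, if (i:ℕ) < (j:ℕ) then y i - y j else 1)
        * ∏ m, ((y m)⁻¹)^(n-1) := by
  have step1 : (∏ i : Fin n, ∏ j : Fin n, if (i:ℕ) < (j:ℕ) then (y j)⁻¹ - (y i)⁻¹ else 1)
      = (∏ i : Fin n, ∏ j : Fin n, if (i:ℕ) < (j:ℕ) then y i - y j else 1)
        * ∏ i : Fin n, ∏ j : Fin n, if (i:ℕ) < (j:ℕ) then (y i)⁻¹ * (y j)⁻¹ else 1 := by
    rw [← Finset.prod_mul_distrib]
    rw [Finset.prod_congr rfl fun i _ => (Finset.prod_mul_distrib).symm]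
    refine Finset.prod_congr rfl fun i _ => Finset.prod_congr rfl fun j _ => ?_
    by_cases h : (i:ℕ) < (j:ℕ)
    · rw [if_pos h, if_pos h, if_pos h]
      rw [inv_sub_inv (hy0 j) (hy0 i), div_eq_mul_inv, mul_inv]
      ring
    · rw [if_neg h, if_neg h, if_neg h, mul_one]
  have step2 : (∏ i : Fin n, ∏ j : Fin n, if (i:ℕ) < (j:ℕ) then (y i)⁻¹ * (y j)⁻¹ else 1)
      = ∏ m, ((y m)⁻¹)^(n-1) := by
    have split : (∏ i : Fin n, ∏ j : Fin n, if (i:ℕ) < (j:ℕ) then (y i)⁻¹ * (y j)⁻¹ else 1)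
        = (∏ i : Fin n, ∏ j : Fin n, if (i:ℕ) < (j:ℕ) then (y i)⁻¹ else 1)
          * ∏ i : Fin n, ∏ j : Fin n, if (i:ℕ) < (j:ℕ) then (y j)⁻¹ else 1 := by
      rw [← Finset.prod_mul_distrib]
      rw [Finset.prod_congr rfl fun i _ => (Finset.prod_mul_distrib).symm]
      refine Finset.prod_congr rfl fun i _ => Finset.prod_congr rfl fun j _ => ?_
      by_cases h : (i:ℕ) < (j:ℕ)
      · rw [if_pos h, if_pos h, if_pos h]
      · rw [if_neg h, if_neg h, if_neg h, mul_one]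
    rw [split, prod_ite_lt_left, prod_ite_lt_right, ← Finset.prod_mul_distrib]
    refine Finset.prod_congr rfl fun m _ => ?_
    rw [← pow_add]
    congr 1
    have := m.isLt
    omega
  rw [step1, step2]

lemma trans_T2 (hy0 : ∀ m, y m ≠ 0) :
    (∏ i : Fin n, ∏ j : Fin n, (y j - (y i)⁻¹))
      = ((-1:F)^n)^n * ((∏ m, ((y m)⁻¹)^n) * ∏ i : Fin n, ∏ j : Fin n, (1 - y i * y j)) := by
  have step1 : (∏ i : Fin n, ∏ j : Fin n, (y j - (y i)⁻¹))
      = ∏ i, ∏ j, ((-1) * ((y i)⁻¹ * (1 - y i * y j))) := by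
    refine Finset.prod_congr rfl fun i _ => Finset.prod_congr rfl fun j _ => ?_
    rw [show (y i)⁻¹ * (1 - y i * y j) = (y i)⁻¹ - y j from by
      rw [mul_sub, mul_one, ← mul_assoc, inv_mul_cancel₀ (hy0 i), one_mul]]
    ring
  rw [step1]
  simp only [Finset.prod_mul_distrib, Finset.prod_const, Finset.card_univ, Fintype.card_fin]

lemma trans_T45 (hy0 : ∀ m, y m ≠ 0) :
    (∏ i : Fin n, (z - (y i)⁻¹)) * (∏ m, (z - y m))
      = (∏ m, (y m)⁻¹) * ((∏ m, (1 - y m * z)) * ∏ m, (y m - z)) := by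
  have h4 : (∏ i : Fin n, (z - (y i)⁻¹)) = ∏ i, ((-1) * ((y i)⁻¹ * (1 - y i * z))) := by
    refine Finset.prod_congr rfl fun i _ => ?_
    rw [show (y i)⁻¹ * (1 - y i * z) = (y i)⁻¹ - z from by
      rw [mul_sub, mul_one, ← mul_assoc, inv_mul_cancel₀ (hy0 i), one_mul]]
    ring
  have h5 : (∏ m : Fin n, (z - y m)) = ∏ m, ((-1) * (y m - z)) := by
    refine Finset.prod_congr rfl fun m _ => ?_
    ring
  have hsq : ((-1:F)^n) * ((-1:F)^n) = 1 := by
    rw [← mul_pow]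
    norm_num
  rw [h4, h5]
  simp only [Finset.prod_mul_distrib, Finset.prod_const, Finset.card_univ, Fintype.card_fin]
  calc ((-1:F)^n * ((∏ i, (y i)⁻¹) * ∏ i, (1 - y i * z))) * ((-1:F)^n * ∏ m, (y m - z))
      = (((-1:F)^n) * ((-1:F)^n)) * ((∏ i, (y i)⁻¹) * ((∏ i, (1 - y i * z)) * ∏ m, (y m - z))) := by
        ring
    _ = _ := by rw [hsq, one_mul]

lemma trans_Pst :
    (∏ m, Pst y z m)
      = (∏ m, (1 - y m * z)) * ((∏ m, (y m - z)) * ((∏ i : Fin n, ∏ j : Fin n, (1 - y i * y j)) *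
          ((∏ i : Fin n, ∏ j : Fin n, if (i:ℕ) < (j:ℕ) then y i - y j else 1)
            * (∏ i : Fin n, ∏ j : Fin n, if (i:ℕ) < (j:ℕ) then y j - y i else 1)))) := by
  have hsplit : ∀ m, Pst y z m = (1 - y m * z) * ((y m - z) *
      (((1 - y m * y m) * ∏ k ∈ univ.erase m, (1 - y k * y m))
        * (∏ k ∈ univ.erase m, (y m - y k)))) := by
    intro m
    rw [Pst, Finset.prod_mul_distrib]
    ring
  rw [Finset.prod_congr rfl (fun m _ => hsplit m)]
  simp only [Finset.prod_mul_distrib]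
  have hmerge : (∏ m, ((1 - y m * y m) * ∏ k ∈ univ.erase m, (1 - y k * y m)))
      = ∏ i : Fin n, ∏ j : Fin n, (1 - y i * y j) := by
    rw [Finset.prod_congr rfl
      (fun m _ => Finset.mul_prod_erase univ (fun k => 1 - y k * y m) (Finset.mem_univ m))]
    exact Finset.prod_comm
  have hanti := prod_erase_split (fun m k => y m - y k)
  rw [Finset.prod_mul_distrib] at hmerge
  rw [hmerge, hanti]

lemma neg_one_pow_pow : (((-1:F)^n)^n) = (-1:F)^n := by
  rcases Nat.even_or_odd n with h | h
  · simp [h.neg_one_pow]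
  · simp [h.neg_one_pow]

lemma pow_merge (hy0 : ∀ m, y m ≠ 0) :
    (∏ m, ((y m)⁻¹)^(n-1)) * ((∏ m, ((y m)⁻¹)^n) * (∏ m, (y m)⁻¹))
      = ∏ m : Fin n, ((y m)^(2*n))⁻¹ := by
  rw [← Finset.prod_mul_distrib, ← Finset.prod_mul_distrib]
  refine Finset.prod_congr rfl fun m _ => ?_
  have hn : (1:ℕ) ≤ n := m.pos
  rw [← inv_pow, show 2*n = (n-1) + (n+1) by omega, pow_add, pow_succ]

end VprodProof
noncomputable section Vprod

variable {F : Type*} [Field F] {n : ℕ}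

lemma eIdx_symm_x (i : Fin n) :
    (eIdx n).symm (Sum.inl (Sum.inl i)) = (⟨(i:ℕ), by omega⟩ : Fin (2*n+1)) := rfl

lemma eIdx_symm_z (u : Unit) :
    (eIdx n).symm (Sum.inl (Sum.inr u)) = (⟨2*n, by omega⟩ : Fin (2*n+1)) := rfl

lemma eIdx_symm_y (m : Fin n) :
    (eIdx n).symm (Sum.inr m) = (⟨n + (m:ℕ), by omega⟩ : Fin (2*n+1)) := rfl

def vf (y : Fin n → F) (z : F) (p q : Idx n) : F :=
  if ((eIdx n).symm p : Fin (2*n+1)) < (eIdx n).symm q then spt y z q - spt y z p else 1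

variable (y : Fin n → F) (z : F)

lemma vf_xx (i j : Fin n) : vf y z (.inl (.inl i)) (.inl (.inl j))
    = if (i:ℕ) < (j:ℕ) then (y j)⁻¹ - (y i)⁻¹ else 1 := by
  simp [vf, eIdx_symm_x, Fin.mk_lt_mk, spt]

lemma vf_xz (i : Fin n) (u : Unit) : vf y z (.inl (.inl i)) (.inl (.inr u))
    = z - (y i)⁻¹ := by
  have h : (i:ℕ) < 2*n := by have := i.isLt; omega
  simp [vf, eIdx_symm_x, eIdx_symm_z, Fin.mk_lt_mk, spt, h]

lemma vf_xy (i m : Fin n) : vf y z (.inl (.inl i)) (.inr m) = y m - (y i)⁻¹ := by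
  have h : (i:ℕ) < n + (m:ℕ) := by have := i.isLt; omega
  simp [vf, eIdx_symm_x, eIdx_symm_y, Fin.mk_lt_mk, spt, h]

lemma vf_zx (u : Unit) (j : Fin n) : vf y z (.inl (.inr u)) (.inl (.inl j)) = 1 := by
  have h : ¬ (2*n < (j:ℕ)) := by have := j.isLt; omega
  simp [vf, eIdx_symm_x, eIdx_symm_z, Fin.mk_lt_mk, h]

lemma vf_zz (u u' : Unit) : vf y z (.inl (.inr u)) (.inl (.inr u')) = 1 := by
  simp [vf, eIdx_symm_z, Fin.mk_lt_mk]

lemma vf_zy (u : Unit) (m : Fin n) : vf y z (.inl (.inr u)) (.inr m) = 1 := by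
  have h : ¬ (2*n < n + (m:ℕ)) := by have := m.isLt; omega
  simp [vf, eIdx_symm_z, eIdx_symm_y, Fin.mk_lt_mk, h]

lemma vf_yx (m j : Fin n) : vf y z (.inr m) (.inl (.inl j)) = 1 := by
  have h : ¬ (n + (m:ℕ) < (j:ℕ)) := by have := j.isLt; omega
  simp [vf, eIdx_symm_x, eIdx_symm_y, Fin.mk_lt_mk, h]

lemma vf_yz (m : Fin n) (u : Unit) : vf y z (.inr m) (.inl (.inr u)) = z - y m := by
  have h : n + (m:ℕ) < 2*n := by have := m.isLt; omega
  simp [vf, eIdx_symm_z, eIdx_symm_y, Fin.mk_lt_mk, spt, h]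

lemma vf_yy (m k : Fin n) : vf y z (.inr m) (.inr k)
    = if (m:ℕ) < (k:ℕ) then y k - y m else 1 := by
  have h : (n + (m:ℕ) < n + (k:ℕ)) ↔ ((m:ℕ) < (k:ℕ)) := by omega
  simp [vf, eIdx_symm_y, Fin.mk_lt_mk, spt, h]

lemma vprod (hy0 : ∀ m, y m ≠ 0) :
    (∏ i : Fin (2*n+1), ∏ j ∈ Finset.Ioi i, (spt y z (eIdx n j) - spt y z (eIdx n i)))
      = (-1)^n * ∏ m, (((y m)^(2*n))⁻¹ * Pst y z m) := by
  have hstep1 : (∏ i : Fin (2*n+1), ∏ j ∈ Finset.Ioi i,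
        (spt y z (eIdx n j) - spt y z (eIdx n i)))
      = ∏ p : Idx n, ∏ q : Idx n, vf y z p q := by
    calc (∏ i : Fin (2*n+1), ∏ j ∈ Finset.Ioi i, (spt y z (eIdx n j) - spt y z (eIdx n i)))
        = ∏ i : Fin (2*n+1), ∏ j : Fin (2*n+1),
            (if i < j then spt y z (eIdx n j) - spt y z (eIdx n i) else 1) := by
          refine Finset.prod_congr rfl fun i _ => ?_
          rw [← Finset.prod_filter]
          congr 1
          ext j
          simp only [Finset.mem_filter, Finset.mem_univ, true_and, Finset.mem_Ioi]
      _ = ∏ p : Idx n, ∏ j : Fin (2*n+1),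
            (if (eIdx n).symm p < j
             then spt y z (eIdx n j) - spt y z (eIdx n ((eIdx n).symm p)) else 1) :=
          (Equiv.prod_comp (eIdx n).symm _).symm
      _ = ∏ p : Idx n, ∏ q : Idx n, (if (eIdx n).symm p < (eIdx n).symm q
            then spt y z (eIdx n ((eIdx n).symm q)) - spt y z (eIdx n ((eIdx n).symm p))
            else 1) :=
          Finset.prod_congr rfl fun p _ => (Equiv.prod_comp (eIdx n).symm _).symm
      _ = ∏ p : Idx n, ∏ q : Idx n, vf y z p q := by
          simp only [Equiv.apply_symm_apply, vf]
  rw [hstep1]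
  simp only [Fintype.prod_sum_type, vf_xx, vf_xz, vf_xy, vf_zx, vf_zz, vf_zy, vf_yx,
    vf_yz, vf_yy, Finset.prod_const_one, one_mul, mul_one, Finset.prod_mul_distrib,
    Fintype.prod_unique]
  rw [trans_T1 y hy0, trans_T45 y z hy0, trans_T2 y hy0, neg_one_pow_pow, trans_Pst y z,
    ← pow_merge y hy0]
  ring

end Vprod

noncomputable section GenericMain

variable {F : Type*} [Field F] {n : ℕ}

variable (y : Fin n → F) (z : F)

lemma Fs_ne (hzy : ∀ m, z ≠ y m) (hzy1 : ∀ m, z * y m ≠ 1) : Fs y z ≠ 0 := by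
  rw [Fs, Finset.prod_ne_zero_iff]
  intro k _
  refine mul_ne_zero (sub_ne_zero.mpr (hzy k)) (sub_ne_zero.mpr (Ne.symm ?_))
  rw [mul_comm]
  exact hzy1 k

lemma Gd_ne (hyy : ∀ m k, m ≠ k → y m ≠ y k) (hyy1 : ∀ m k, y m * y k ≠ 1)
    (hzy : ∀ m, z ≠ y m) (hzy1 : ∀ m, z * y m ≠ 1) (m : Fin n) : Gd y z m ≠ 0 := by
  refine mul_ne_zero (sub_ne_zero.mpr (Ne.symm (hzy m)))
    (mul_ne_zero (sub_ne_zero.mpr (Ne.symm (hzy1 m))) ?_)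
  rw [Finset.prod_ne_zero_iff]
  intro k hk
  exact mul_ne_zero
    (sub_ne_zero.mpr (hyy m k (Ne.symm (Finset.ne_of_mem_erase hk))))
    (sub_ne_zero.mpr (Ne.symm (hyy1 k m)))

lemma Pst_ne (hyy : ∀ m k, m ≠ k → y m ≠ y k) (hyy1 : ∀ m k, y m * y k ≠ 1)
    (hzy : ∀ m, z ≠ y m) (hzy1 : ∀ m, z * y m ≠ 1) (m : Fin n) : Pst y z m ≠ 0 := by
  refine mul_ne_zero (sub_ne_zero.mpr (Ne.symm (by rw [mul_comm]; exact hzy1 m)))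
    (mul_ne_zero (sub_ne_zero.mpr (Ne.symm (hzy m)))
      (mul_ne_zero (sub_ne_zero.mpr (Ne.symm (hyy1 m m))) ?_))
  rw [Finset.prod_ne_zero_iff]
  intro k hk
  exact mul_ne_zero
    (sub_ne_zero.mpr (hyy m k (Ne.symm (Finset.ne_of_mem_erase hk))))
    (sub_ne_zero.mpr (Ne.symm (hyy1 k m)))

variable (x a b : Fin n → F) (c : F)

lemma Vmat_eq_submatrix :
    Vmat n x y a b z c = (Amat x y a b z c).submatrix (eIdx n) id := by
  ext i k
  simp only [Vmat, Matrix.of_apply, Matrix.submatrix_apply, id_eq]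
  by_cases h1 : (i : ℕ) < n
  · rw [dif_pos h1]
    have he : eIdx n i = Sum.inl (Sum.inl ⟨(i:ℕ), h1⟩) := by
      simp [eIdx, Equiv.coe_fn_mk, h1]
    rw [he]
    simp [Amat, tpt, dpt]
  · by_cases h2 : (i : ℕ) < 2*n
    · rw [dif_neg h1, dif_pos h2]
      have he : eIdx n i = Sum.inr ⟨(i:ℕ) - n, by omega⟩ := by
        simp [eIdx, Equiv.coe_fn_mk, h1, h2]
      rw [he]
      simp [Amat, tpt, dpt]
    · rw [dif_neg h1, dif_neg h2]
      have he : eIdx n i = Sum.inl (Sum.inr ()) := by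
        simp [eIdx, Equiv.coe_fn_mk, h1, h2]
      rw [he]
      simp [Amat, tpt, dpt]

lemma Bmat_eq_submatrix :
    Bmat n x y a b z c = (BmatS x y a b z c).submatrix (eFin n) (eFin n) := by
  ext i j
  simp only [Bmat, Matrix.of_apply, Matrix.submatrix_apply]
  by_cases hi : (i : ℕ) < n
  · have hei : eFin n i = Sum.inl ⟨(i:ℕ), hi⟩ := by simp [eFin, Equiv.coe_fn_mk, hi]
    rw [dif_pos hi, hei]
    by_cases hj : (j : ℕ) < n
    · have hej : eFin n j = Sum.inl ⟨(j:ℕ), hj⟩ := by simp [eFin, Equiv.coe_fn_mk, hj]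
      rw [dif_pos hj, hej]
      simp [BmatS]
    · have hej : eFin n j = Sum.inr () := by simp [eFin, Equiv.coe_fn_mk, hj]
      rw [dif_neg hj, hej]
      simp [BmatS]
  · have hei : eFin n i = Sum.inr () := by simp [eFin, Equiv.coe_fn_mk, hi]
    rw [dif_neg hi, hei]
    by_cases hj : (j : ℕ) < n
    · have hej : eFin n j = Sum.inl ⟨(j:ℕ), hj⟩ := by simp [eFin, Equiv.coe_fn_mk, hj]
      rw [dif_pos hj, hej]
      simp [BmatS]
    · have hej : eFin n j = Sum.inr () := by simp [eFin, Equiv.coe_fn_mk, hj]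
      rw [dif_neg hj, hej]
      simp [BmatS]

lemma VdmA_eq_vandermonde :
    (VdmA y z).submatrix (eIdx n) id = Matrix.vandermonde (fun i => spt y z (eIdx n i)) := by
  ext i k
  simp [VdmA, Matrix.vandermonde]

theorem okada_generic (hx0 : ∀ i, x i ≠ 0) (hy0 : ∀ m, y m ≠ 0) (hz0 : z ≠ 0)
    (hyy : ∀ m k, m ≠ k → y m ≠ y k) (hyy1 : ∀ m k, y m * y k ≠ 1)
    (hzy : ∀ m, z ≠ y m) (hzy1 : ∀ m, z * y m ≠ 1) (hb : ∀ m, b m ≠ 1) :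
    (Vmat n x y a b z c).det = (-1)^n * (Bmat n x y a b z c).det := by
  have hGd : ∀ m, Gd y z m ≠ 0 := Gd_ne y z hyy hyy1 hzy hzy1
  have hPst : ∀ m, Pst y z m ≠ 0 := Pst_ne y z hyy hyy1 hzy hzy1
  have hFs : Fs y z ≠ 0 := Fs_ne y z hzy hzy1
  have e1 : (Amat x y a b z c).submatrix (⇑(eIdx n)) id * (Tmat y z b).submatrix id ⇑(eIdx n)
      = (Amat x y a b z c * Tmat y z b).submatrix (⇑(eIdx n)) ⇑(eIdx n) := by
    have h := Matrix.submatrix_mul_equiv (Amat x y a b z c) (Tmat y z b) (⇑(eIdx n))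
      (Equiv.refl (Fin (2*n+1))) (⇑(eIdx n))
    simpa using h
  have e2 : (VdmA y z).submatrix (⇑(eIdx n)) id * (Tmat y z b).submatrix id ⇑(eIdx n)
      = (VdmA y z * Tmat y z b).submatrix (⇑(eIdx n)) ⇑(eIdx n) := by
    have h := Matrix.submatrix_mul_equiv (VdmA y z) (Tmat y z b) (⇑(eIdx n))
      (Equiv.refl (Fin (2*n+1))) (⇑(eIdx n))
    simpa using h
  have f1 : (Vmat n x y a b z c).det * ((Tmat y z b).submatrix id ⇑(eIdx n)).det
      = (Amat x y a b z c * Tmat y z b).det := by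
    rw [Vmat_eq_submatrix, ← Matrix.det_mul, e1, Matrix.det_submatrix_equiv_self]
  have f2 : ((VdmA y z).submatrix (⇑(eIdx n)) id).det * ((Tmat y z b).submatrix id ⇑(eIdx n)).det
      = (VdmA y z * Tmat y z b).det := by
    rw [← Matrix.det_mul, e2, Matrix.det_submatrix_equiv_self]
  have key : (Vmat n x y a b z c).det * (VdmA y z * Tmat y z b).det
      = (Amat x y a b z c * Tmat y z b).det * ((VdmA y z).submatrix (⇑(eIdx n)) id).det := by
    calc (Vmat n x y a b z c).det * (VdmA y z * Tmat y z b).det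
        = (Vmat n x y a b z c).det
            * (((VdmA y z).submatrix (⇑(eIdx n)) id).det
              * ((Tmat y z b).submatrix id ⇑(eIdx n)).det) := by rw [f2]
      _ = ((Vmat n x y a b z c).det * ((Tmat y z b).submatrix id ⇑(eIdx n)).det)
            * ((VdmA y z).submatrix (⇑(eIdx n)) id).det := by ring
      _ = _ := by rw [f1]
  rw [detM x y a b z c hx0 hy0 hz0, detE y z b hy0 hGd, VdmA_eq_vandermonde,
    Matrix.det_vandermonde, vprod y z hy0] at key
  have hval : (Fs y z * ((BmatS x y a b z c).det * ∏ m, ((1 - b m) * Gd y z m)))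
        * ((-1)^n * ∏ m, (((y m)^(2*n))⁻¹ * Pst y z m))
      = ((-1)^n * (BmatS x y a b z c).det)
        * ((∏ m, DD y z b m) * (Fs y z * ∏ m, Gd y z m)) := by
    simp only [DD, Finset.prod_mul_distrib]
    ring
  rw [hval] at key
  have hne : (∏ m, DD y z b m) * (Fs y z * ∏ m, Gd y z m) ≠ 0 := by
    refine mul_ne_zero ?_ (mul_ne_zero hFs ?_)
    · rw [Finset.prod_ne_zero_iff]
      intro m _
      exact mul_ne_zero (sub_ne_zero.mpr (Ne.symm (hb m)))
        (mul_ne_zero (inv_ne_zero (pow_ne_zero _ (hy0 m))) (hPst m))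
    · rw [Finset.prod_ne_zero_iff]
      intro m _
      exact hGd m
  have hfin := mul_right_cancel₀ hne key
  rw [hfin, Bmat_eq_submatrix, Matrix.det_submatrix_equiv_self]

end GenericMain

section Transfer

lemma map_Np {R S : Type*} [CommRing R] [CommRing S] (g : R →+* S) (x y z a b : R) :
    g (Np x y z a b) = Np (g x) (g y) (g z) (g a) (g b) := by
  simp [Np]

lemma map_Vmat {R S : Type*} [CommRing R] [CommRing S] (g : R →+* S) (n : ℕ)
    (x y a b : Fin n → R) (z c : R) :
    (Vmat n x y a b z c).map g = Vmat n (g ∘ x) (g ∘ y) (g ∘ a) (g ∘ b) (g z) (g c) := by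
  ext i j
  simp only [Matrix.map_apply, Vmat, Matrix.of_apply, Function.comp_apply]
  split_ifs <;> simp

lemma map_Bmat {R S : Type*} [CommRing R] [CommRing S] (g : R →+* S) (n : ℕ)
    (x y a b : Fin n → R) (z c : R) :
    (Bmat n x y a b z c).map g = Bmat n (g ∘ x) (g ∘ y) (g ∘ a) (g ∘ b) (g z) (g c) := by
  ext i j
  simp only [Matrix.map_apply, Bmat, Matrix.of_apply, Function.comp_apply]
  split_ifs <;> simp [map_Np, map_prod]

variable {K : Type*} [Field K]

theorem okada_key (n : ℕ) (x y a b : Fin n → K) (z c : K) :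
    (Vmat n x y a b z c).det = (-1)^n * (Bmat n x y a b z c).det := by
  classical
  set σ := (Fin n ⊕ (Fin n ⊕ (Fin n ⊕ (Fin n ⊕ Bool)))) with hσ
  set R := MvPolynomial σ K with hR
  set FF := FractionRing R with hFF
  set φ : R →+* FF := algebraMap R FF with hφ
  have hinj : Function.Injective φ := IsFractionRing.injective R FF
  set vx : Fin n → R := fun i => MvPolynomial.X (Sum.inl i) with hvx
  set vy : Fin n → R := fun m => MvPolynomial.X (Sum.inr (Sum.inl m)) with hvy
  set va : Fin n → R := fun i => MvPolynomial.X (Sum.inr (Sum.inr (Sum.inl i))) with hva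
  set vb : Fin n → R := fun m => MvPolynomial.X (Sum.inr (Sum.inr (Sum.inr (Sum.inl m)))) with hvb
  set vz : R := MvPolynomial.X (Sum.inr (Sum.inr (Sum.inr (Sum.inr true)))) with hvz
  set vc : R := MvPolynomial.X (Sum.inr (Sum.inr (Sum.inr (Sum.inr false)))) with hvc
  have tool : ∀ (p q : R) (pt : σ → K),
      MvPolynomial.aeval pt p ≠ MvPolynomial.aeval pt q → φ p ≠ φ q := by
    intro p q pt h he
    exact h (congrArg (MvPolynomial.aeval pt) (hinj he))
  -- genericity
  have hx0 : ∀ i, φ (vx i) ≠ 0 := by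
    intro i
    have := tool (vx i) 0 (fun _ => 1) (by simp [hvx])
    simpa using this
  have hy0 : ∀ m, φ (vy m) ≠ 0 := by
    intro m
    have := tool (vy m) 0 (fun _ => 1) (by simp [hvy])
    simpa using this
  have hz0 : φ vz ≠ 0 := by
    have := tool vz 0 (fun _ => 1) (by simp [hvz])
    simpa using this
  have hyy : ∀ m k, m ≠ k → φ (vy m) ≠ φ (vy k) := by
    intro m k hmk
    refine tool _ _ (fun s => if s = Sum.inr (Sum.inl m) then 1 else 0) ?_
    simp only [hvy, MvPolynomial.aeval_X]
    rw [if_pos trivial, if_neg (fun h => hmk (Sum.inl.inj (Sum.inr.inj h)).symm)]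
    exact one_ne_zero
  have hyy1 : ∀ m k, φ (vy m) * φ (vy k) ≠ 1 := by
    intro m k
    have := tool (vy m * vy k) 1 (fun _ => 0) (by simp [hvy])
    simpa using this
  have hzy : ∀ m, φ vz ≠ φ (vy m) := by
    intro m
    refine tool _ _ (fun s => if s = Sum.inr (Sum.inr (Sum.inr (Sum.inr true))) then 1 else 0) ?_
    simp only [hvy, hvz, MvPolynomial.aeval_X]
    rw [if_pos trivial, if_neg (fun h => Sum.inl_ne_inr (Sum.inr.inj h))]
    exact one_ne_zero
  have hzy1 : ∀ m, φ vz * φ (vy m) ≠ 1 := by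
    intro m
    have := tool (vz * vy m) 1 (fun _ => 0) (by simp [hvy, hvz])
    simpa using this
  have hbne : ∀ m, φ (vb m) ≠ 1 := by
    intro m
    have := tool (vb m) 1 (fun _ => 0) (by simp [hvb])
    simpa using this
  have hgen := okada_generic (φ ∘ vy) (φ vz) (φ ∘ vx) (φ ∘ va) (φ ∘ vb) (φ vc)
    hx0 hy0 hz0 hyy hyy1 hzy hzy1 hbne
  have hVeq : φ ((Vmat n vx vy va vb vz vc).det)
      = (Vmat n (φ ∘ vx) (φ ∘ vy) (φ ∘ va) (φ ∘ vb) (φ vz) (φ vc)).det := by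
    rw [RingHom.map_det, RingHom.mapMatrix_apply, map_Vmat]
  have hBeq : φ ((Bmat n vx vy va vb vz vc).det)
      = (Bmat n (φ ∘ vx) (φ ∘ vy) (φ ∘ va) (φ ∘ vb) (φ vz) (φ vc)).det := by
    rw [RingHom.map_det, RingHom.mapMatrix_apply, map_Bmat]
  have hRid : (Vmat n vx vy va vb vz vc).det
      = (-1)^n * (Bmat n vx vy va vb vz vc).det := by
    apply hinj
    rw [hVeq, hgen, _root_.map_mul, _root_.map_pow, _root_.map_neg, _root_.map_one, hBeq]
  -- specialize
  set pt : σ → K := Sum.elim x (Sum.elim y (Sum.elim a (Sum.elim b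
    (fun s => if s then z else c)))) with hpt
  set ψ : R →+* K := (MvPolynomial.aeval pt).toRingHom with hψ
  have hψx : ψ ∘ vx = x := funext fun i => MvPolynomial.aeval_X pt (Sum.inl i)
  have hψy : ψ ∘ vy = y := funext fun m => MvPolynomial.aeval_X pt (Sum.inr (Sum.inl m))
  have hψa : ψ ∘ va = a := funext fun i =>
    MvPolynomial.aeval_X pt (Sum.inr (Sum.inr (Sum.inl i)))
  have hψb : ψ ∘ vb = b := funext fun m =>
    MvPolynomial.aeval_X pt (Sum.inr (Sum.inr (Sum.inr (Sum.inl m))))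
  have hψz : ψ vz = z := MvPolynomial.aeval_X pt (Sum.inr (Sum.inr (Sum.inr (Sum.inr true))))
  have hψc : ψ vc = c := MvPolynomial.aeval_X pt (Sum.inr (Sum.inr (Sum.inr (Sum.inr false))))
  calc (Vmat n x y a b z c).det
      = ψ ((Vmat n vx vy va vb vz vc).det) := by
        rw [RingHom.map_det, RingHom.mapMatrix_apply, map_Vmat, hψx, hψy, hψa, hψb, hψz, hψc]
    _ = ψ ((-1)^n * (Bmat n vx vy va vb vz vc).det) := by rw [hRid]
    _ = (-1)^n * (Bmat n x y a b z c).det := by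
        rw [_root_.map_mul, _root_.map_pow, _root_.map_neg, _root_.map_one, RingHom.map_det,
          RingHom.mapMatrix_apply, map_Bmat, hψx, hψy, hψa, hψb, hψz, hψc]

end Transfer

end Okada

/-- The rational function `p(x,y,z,a,b)` of Okada's Lemma 3.2. -/
noncomputable def pfun {K : Type*} [Field K] (x y z a b : K) : K :=
  (1 - x * z) * (1 - y * z) / (1 - x * y)
    - a * ((x - z) * (1 - y * z) / (x - y))
    + b * ((1 - x * z) * (y - z) / (x - y))
    - a * b * ((x - z) * (y - z) / (1 - x * y))

/-- Okada's Lemma 3.2: `det C = (−1)^n · det V / ((1−z²) ∏_{i,j}(x_i−y_j)(1−x_i y_j))`. -/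
theorem det_C_eq_det_V {K : Type*} [Field K] (n : ℕ) (x y a b : Fin n → K) (z c : K)
    (hz : z ^ 2 ≠ 1)
    (hxy : ∀ i j, x i ≠ y j) (hxy1 : ∀ i j, x i * y j ≠ 1) :
    (Matrix.of fun i j : Fin (n + 1) =>
        if hi : (i : ℕ) < n then
          if hj : (j : ℕ) < n then pfun (x ⟨i, hi⟩) (y ⟨j, hj⟩) z (a ⟨i, hi⟩) (b ⟨j, hj⟩)
          else 1 - a ⟨i, hi⟩
        else
          if hj : (j : ℕ) < n then 1 - b ⟨j, hj⟩
          else (1 - c) / (1 - z ^ 2)).det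
      = (-1 : K) ^ n *
          (Matrix.of fun i j : Fin (2 * n + 1) =>
            if h : (i : ℕ) < n then
              x ⟨i, h⟩ ^ (j : ℕ) - a ⟨i, h⟩ * x ⟨i, h⟩ ^ (2 * n - (j : ℕ))
            else if h2 : (i : ℕ) < 2 * n then
              y ⟨(i : ℕ) - n, by omega⟩ ^ (j : ℕ)
                - b ⟨(i : ℕ) - n, by omega⟩ * y ⟨(i : ℕ) - n, by omega⟩ ^ (2 * n - (j : ℕ))
            else z ^ (j : ℕ) - c * z ^ (2 * n - (j : ℕ))).det /
          ((1 - z ^ 2) * ∏ i, ∏ j, (x i - y j) * (1 - x i * y j)) := by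
  classical
  have h1 : (1:K) - z^2 ≠ 0 := sub_ne_zero.mpr (Ne.symm hz)
  have hprod : (∏ i, ∏ j, (x i - y j) * (1 - x i * y j)) ≠ 0 := by
    rw [Finset.prod_ne_zero_iff]
    intro i _
    rw [Finset.prod_ne_zero_iff]
    intro j _
    exact mul_ne_zero (sub_ne_zero.mpr (hxy i j)) (sub_ne_zero.mpr (Ne.symm (hxy1 i j)))
  set CM := (Matrix.of fun i j : Fin (n + 1) =>
      if hi : (i : ℕ) < n then
        if hj : (j : ℕ) < n then pfun (x ⟨i, hi⟩) (y ⟨j, hj⟩) z (a ⟨i, hi⟩) (b ⟨j, hj⟩)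
        else 1 - a ⟨i, hi⟩
      else
        if hj : (j : ℕ) < n then 1 - b ⟨j, hj⟩
        else (1 - c) / (1 - z ^ 2)) with hCM
  have hVdef : (Matrix.of fun i j : Fin (2 * n + 1) =>
      if h : (i : ℕ) < n then
        x ⟨i, h⟩ ^ (j : ℕ) - a ⟨i, h⟩ * x ⟨i, h⟩ ^ (2 * n - (j : ℕ))
      else if h2 : (i : ℕ) < 2 * n then
        y ⟨(i : ℕ) - n, by omega⟩ ^ (j : ℕ)
          - b ⟨(i : ℕ) - n, by omega⟩ * y ⟨(i : ℕ) - n, by omega⟩ ^ (2 * n - (j : ℕ))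
      else z ^ (j : ℕ) - c * z ^ (2 * n - (j : ℕ))) = Okada.Vmat n x y a b z c := rfl
  rw [hVdef, Okada.okada_key n x y a b z c]
  -- relate Bmat to CM
  set v : Fin (n+1) → K := fun i =>
    if h : (i : ℕ) < n then ∏ k, ((x ⟨(i:ℕ), h⟩ - y k) * (1 - y k * x ⟨(i:ℕ), h⟩))
    else (1 - z^2) with hv
  have hentry : Okada.Bmat n x y a b z c = Matrix.of (fun i j => v i * CM i j) := by
    ext i j
    simp only [Okada.Bmat, Matrix.of_apply, hCM, hv]
    by_cases hi : (i : ℕ) < n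
    · by_cases hj : (j : ℕ) < n
      · simp only [dif_pos hi, dif_pos hj]
        rw [← Finset.mul_prod_erase Finset.univ
          (fun k => (x ⟨(i:ℕ), hi⟩ - y k) * (1 - y k * x ⟨(i:ℕ), hi⟩))
          (Finset.mem_univ ⟨(j:ℕ), hj⟩)]
        have d1 : x ⟨(i:ℕ), hi⟩ - y ⟨(j:ℕ), hj⟩ ≠ 0 := sub_ne_zero.mpr (hxy _ _)
        have d2 : (1:K) - x ⟨(i:ℕ), hi⟩ * y ⟨(j:ℕ), hj⟩ ≠ 0 :=
          sub_ne_zero.mpr (Ne.symm (hxy1 _ _))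
        rw [pfun, Okada.Np]
        field_simp
      · simp only [dif_pos hi, dif_neg hj]
        ring
    · by_cases hj : (j : ℕ) < n
      · simp only [dif_neg hi, dif_pos hj]
      · simp only [dif_neg hi, dif_neg hj]
        field_simp
  have hwprod : (∏ i, v i) = (1 - z^2) * ∏ i, ∏ j, (x i - y j) * (1 - x i * y j) := by
    rw [Fin.prod_univ_castSucc]
    have hlast : v (Fin.last n) = (1 - z^2) := by
      simp only [hv]
      rw [dif_neg (by simp)]
    have hcs : (∏ i : Fin n, v i.castSucc) = ∏ i, ∏ j, (x i - y j) * (1 - x i * y j) := by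
      refine Finset.prod_congr rfl fun i _ => ?_
      simp only [hv]
      have hc : ((i.castSucc : Fin (n+1)) : ℕ) < n := by simpa using i.isLt
      rw [dif_pos hc]
      have he : (⟨((i.castSucc : Fin (n+1)) : ℕ), hc⟩ : Fin n) = i := Fin.ext (by simp)
      rw [he]
      exact Finset.prod_congr rfl fun k _ => by ring
    rw [hlast, hcs, mul_comm]
  have hBC : (Okada.Bmat n x y a b z c).det
      = ((1 - z ^ 2) * ∏ i, ∏ j, (x i - y j) * (1 - x i * y j)) * CM.det := by
    rw [hentry, Matrix.det_mul_column, hwprod]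
  rw [hBC]
  rw [eq_div_iff (mul_ne_zero h1 hprod)]
  have hs : (-1:K)^n * (-1)^n = 1 := by
    rw [← mul_pow]
    norm_num
  linear_combination (-(((1 - z ^ 2) * ∏ i, ∏ j, (x i - y j) * (1 - x i * y j)) * CM.det)) * hs
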